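/- Let A be an r×r real matrix and let T be the (r−1)×r matrix whose first column is the all-ones vector 𝟙_{r−1} and whose remaining (r−1)×(r−1) block is −Id_{r−1}. Then det(T · A · Tᵀ) = 𝟙_rᵀ · adj(A) · 𝟙_r, i.e., the determinant of T A Tᵀ equals the sum of all entries of the adjugate of A. -/

import Mathlib

open Matrix BigOperators

/-- **Determinant Lemma.** Let `A` be an `r × r` real matrix and `T` the
`(r-1) × r` matrix whose first column is all ones and whose remaining block is
`-Id_{r-1}`.  Then `det (T * A * Tᵀ)` equals the sum of all entries of the
adjugate of `A`. -/
theorem determinant_lemma (r : ℕ) (hr : 1 ≤ r) (A : Matrix (Fin r) (Fin r) ℝ)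
    (T : Matrix (Fin (r - 1)) (Fin r) ℝ)
    (hT : ∀ i j, T i j =
      if (j : ℕ) = 0 then 1 else if (j : ℕ) = (i : ℕ) + 1 then -1 else 0) :
    (T * A * Tᵀ).det = ∑ s, ∑ t, A.adjugate s t := by
  obtain ⟨m, rfl⟩ : ∃ m, r = m + 1 := ⟨r - 1, (Nat.succ_pred_eq_of_pos hr).symm⟩
  -- `P` has ones in column 0 below the diagonal
  set P : Matrix (Fin (m + 1)) (Fin (m + 1)) ℝ :=
    fun i j => if j = 0 ∧ i ≠ 0 then 1 else 0 with hP
  have hPa : ∀ i j, P i j = if j = 0 ∧ i ≠ 0 then 1 else 0 := fun i j => rfl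
  have hPP : P * P = 0 := by
    ext i j
    rw [mul_apply]
    refine Finset.sum_eq_zero fun k _ => ?_
    rcases eq_or_ne k 0 with hk | hk <;> simp [hP, hk]
  set G : Matrix (Fin (m + 1)) (Fin (m + 1)) ℝ := 1 - P with hG
  set H : Matrix (Fin (m + 1)) (Fin (m + 1)) ℝ := 1 + P with hH
  have hGH : G * H = 1 := by
    rw [hG, hH, Matrix.sub_mul, Matrix.mul_add, Matrix.mul_add, Matrix.one_mul,
      Matrix.one_mul, Matrix.mul_one, hPP]
    abel
  have hdetG : G.det = 1 := by
    rw [Matrix.det_of_lowerTriangular G ?ht]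
    · refine Finset.prod_eq_one fun i _ => ?_
      simp [hG, hPa, Matrix.one_apply]
    · intro i j hij
      simp only [OrderDual.toDual_lt_toDual] at hij
      have h1 : i ≠ j := ne_of_lt hij
      have hij' : i < j := by simpa using hij
      have h2 : j ≠ 0 := ((Fin.zero_le i).trans_lt hij').ne'
      simp [hG, hPa, Matrix.one_apply, h1, h2]
  have hadjG : G.adjugate = H := by
    calc G.adjugate = G.adjugate * (G * H) := by rw [hGH, Matrix.mul_one]
    _ = (G.adjugate * G) * H := by rw [Matrix.mul_assoc]
    _ = H := by rw [Matrix.adjugate_mul, hdetG, one_smul, Matrix.one_mul]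
  -- the key conjugated matrix
  set M : Matrix (Fin (m + 1)) (Fin (m + 1)) ℝ := G * A * Gᵀ with hM
  -- Step 1 : `T = -(G.submatrix Fin.succ id)`
  have hT' : T = -(G.submatrix Fin.succ id) := by
    ext i j
    rw [hT]
    simp only [Matrix.neg_apply, Matrix.submatrix_apply, id_eq, hG, Matrix.sub_apply,
      Matrix.one_apply, hPa]
    have hs0 : i.succ ≠ 0 := Fin.succ_ne_zero i
    rcases eq_or_ne j 0 with hj | hj
    · have : (j : ℕ) = 0 := by simp [hj]
      have hne : i.succ ≠ j := hj ▸ hs0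
      simp [this, hj, hne, hs0]
    · have hj' : (j : ℕ) ≠ 0 := fun h => hj (Fin.ext h)
      rcases eq_or_ne j i.succ with hji | hji
      · have : (j : ℕ) = (i : ℕ) + 1 := by simp [hji]
        simp [hj', this, hji.symm, hj]
      · have : (j : ℕ) ≠ (i : ℕ) + 1 := by
          intro h
          exact hji (Fin.ext (by simpa using h))
        simp [hj', this, hj, hji, Ne.symm hji]
  -- Step 2 : `T * A * Tᵀ` is the (0,0) minor of `M`
  have hmin : T * A * Tᵀ = M.submatrix Fin.succ Fin.succ := by
    rw [hT', Matrix.transpose_neg, Matrix.neg_mul, Matrix.mul_neg, Matrix.neg_mul, neg_neg,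
      Matrix.transpose_submatrix, hM,
      Matrix.submatrix_mul (G * A) Gᵀ Fin.succ id Fin.succ Function.bijective_id,
      Matrix.submatrix_mul G A Fin.succ id id Function.bijective_id, Matrix.submatrix_id_id]
  -- Step 3 : the determinant of the minor is `adjugate M 0 0`
  have hadjM : (T * A * Tᵀ).det = M.adjugate 0 0 := by
    rw [hmin, Matrix.adjugate_fin_succ_eq_det_submatrix M 0 0]
    simp [Fin.succAbove_zero]
  -- Step 4 : `adjugate M = Hᵀ * adjugate A * H`
  have hadj : M.adjugate = Hᵀ * A.adjugate * H := by
    rw [hM, Matrix.adjugate_mul_distrib, Matrix.adjugate_mul_distrib, ← Matrix.adjugate_transpose,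
      hadjG, Matrix.mul_assoc]
  have hH0 : ∀ k, H k 0 = 1 := by
    intro k
    rcases eq_or_ne k 0 with hk | hk <;> simp [hH, hPa, Matrix.one_apply, hk]
  rw [hadjM, hadj, Matrix.mul_apply]
  simp_rw [hH0, mul_one, Matrix.mul_apply, Matrix.transpose_apply, hH0, one_mul]
  exact Finset.sum_comm
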